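/- arXiv:1810.12425 — 2 statements merged into one kernel-verified Lean document; each statement's English description precedes it below -/
import Mathlib

section
/- Let P₀₀, P₁₀, P₁₁, P₀₁ be the vertices (in order) of a strictly convex quadrilateral in ℝ² with positive orientation. Then the bilinear map G(ξ₁,ξ₂) = (1−ξ₁)(1−ξ₂)P₀₀ + ξ₁(1−ξ₂)P₁₀ + (1−ξ₁)ξ₂P₀₁ + ξ₁ξ₂P₁₁ has det(∇G)(ξ₁,ξ₂) > 0 for all (ξ₁,ξ₂) ∈ [0,1]². -/
/-- 2D cross product. -/
def cross2 (a b : ℝ × ℝ) : ℝ := a.1 * b.2 - a.2 * b.1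

lemma det_clm_aux (L : (ℝ × ℝ) →L[ℝ] (ℝ × ℝ)) :
    LinearMap.det (L : (ℝ × ℝ) →ₗ[ℝ] (ℝ × ℝ)) =
      (L (1, 0)).1 * (L (0, 1)).2 - (L (1, 0)).2 * (L (0, 1)).1 := by
  rw [← LinearMap.det_toMatrix (Module.Basis.finTwoProd ℝ), Matrix.det_fin_two]
  simp [LinearMap.toMatrix_apply, Module.Basis.finTwoProd]
  ring

lemma convex_combo_pos {a A B : ℝ} (ha : 0 ≤ a) (ha1 : a ≤ 1)
    (hA : 0 < A) (hB : 0 < B) : 0 < (1 - a) * A + a * B := by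
  rcases eq_or_lt_of_le ha with h | h
  · simp [← h, hA]
  · have := mul_pos h hB
    nlinarith [mul_nonneg (sub_nonneg.2 ha1) hA.le]

/-- The bilinear interpolant of a strictly convex, positively oriented
quadrilateral has positive Jacobian determinant on `[0,1]²`. -/
theorem bilinear_interpolant_jacobian_pos
    (P₀₀ P₁₀ P₁₁ P₀₁ : ℝ × ℝ)
    (h₀₀ : 0 < cross2 (P₁₀ - P₀₀) (P₀₁ - P₀₀))
    (h₁₀ : 0 < cross2 (P₁₁ - P₁₀) (P₀₀ - P₁₀))
    (h₁₁ : 0 < cross2 (P₀₁ - P₁₁) (P₁₀ - P₁₁))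
    (h₀₁ : 0 < cross2 (P₀₀ - P₀₁) (P₁₁ - P₀₁))
    (G : ℝ × ℝ → ℝ × ℝ)
    (hG : ∀ ξ : ℝ × ℝ, G ξ =
      ((1 - ξ.1) * (1 - ξ.2)) • P₀₀ + (ξ.1 * (1 - ξ.2)) • P₁₀
      + ((1 - ξ.1) * ξ.2) • P₀₁ + (ξ.1 * ξ.2) • P₁₁) :
    ∀ ξ ∈ Set.Icc ((0 : ℝ), (0 : ℝ)) (1, 1),
      0 < LinearMap.det ((fderiv ℝ G ξ : (ℝ × ℝ) →L[ℝ] (ℝ × ℝ)) :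
        (ℝ × ℝ) →ₗ[ℝ] (ℝ × ℝ)) := by
  intro ξ hξ
  obtain ⟨⟨ha0, hb0⟩, ⟨ha1, hb1⟩⟩ := hξ
  have hGfun : G = fun ξ : ℝ × ℝ =>
      ((1 - ξ.1) * (1 - ξ.2)) • P₀₀ + (ξ.1 * (1 - ξ.2)) • P₁₀
      + ((1 - ξ.1) * ξ.2) • P₀₁ + (ξ.1 * ξ.2) • P₁₁ := funext hG
  set L : (ℝ × ℝ) →L[ℝ] (ℝ × ℝ) :=
    (((1 - ξ.1) • (-(ContinuousLinearMap.snd ℝ ℝ ℝ)) + (1 - ξ.2) • (-(ContinuousLinearMap.fst ℝ ℝ ℝ))).smulRight P₀₀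
        + (ξ.1 • (-(ContinuousLinearMap.snd ℝ ℝ ℝ)) + (1 - ξ.2) • (ContinuousLinearMap.fst ℝ ℝ ℝ)).smulRight P₁₀)
        + ((1 - ξ.1) • (ContinuousLinearMap.snd ℝ ℝ ℝ) + ξ.2 • (-(ContinuousLinearMap.fst ℝ ℝ ℝ))).smulRight P₀₁
        + (ξ.1 • (ContinuousLinearMap.snd ℝ ℝ ℝ) + ξ.2 • (ContinuousLinearMap.fst ℝ ℝ ℝ)).smulRight P₁₁ with hL
  have hD : HasFDerivAt G L ξ := by
    rw [hGfun]
    have hf : HasFDerivAt (fun ξ : ℝ × ℝ => ξ.1) (ContinuousLinearMap.fst ℝ ℝ ℝ) ξ := hasFDerivAt_fst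
    have hs : HasFDerivAt (fun ξ : ℝ × ℝ => ξ.2) (ContinuousLinearMap.snd ℝ ℝ ℝ) ξ := hasFDerivAt_snd
    have h1f : HasFDerivAt (fun ξ : ℝ × ℝ => 1 - ξ.1) (-(ContinuousLinearMap.fst ℝ ℝ ℝ)) ξ := by
      exact hf.const_sub 1
    have h1s : HasFDerivAt (fun ξ : ℝ × ℝ => 1 - ξ.2) (-(ContinuousLinearMap.snd ℝ ℝ ℝ)) ξ := by
      exact hs.const_sub 1
    exact (((h1f.mul h1s).smul_const P₀₀).add ((hf.mul h1s).smul_const P₁₀)).add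
        ((h1f.mul hs).smul_const P₀₁) |>.add ((hf.mul hs).smul_const P₁₁)
  rw [hD.fderiv, det_clm_aux]
  have hu1 : L (1, 0) = ((1 - ξ.2) * -1) • P₀₀ + ((1 - ξ.2) * 1) • P₁₀
      + (ξ.2 * -1) • P₀₁ + (ξ.2 * 1) • P₁₁ := by
    simp [hL, ContinuousLinearMap.smulRight_apply, ContinuousLinearMap.add_apply,
      ContinuousLinearMap.smul_apply, ContinuousLinearMap.neg_apply]
    try module
  have hu2 : L (0, 1) = ((1 - ξ.1) * -1) • P₀₀ + ((1 - ξ.1) * 1) • P₀₁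
      + (ξ.1 * -1) • P₁₀ + (ξ.1 * 1) • P₁₁ := by
    simp [hL, ContinuousLinearMap.smulRight_apply, ContinuousLinearMap.add_apply,
      ContinuousLinearMap.smul_apply, ContinuousLinearMap.neg_apply]
    try module
  rw [hu1, hu2]
  have key : (((1 - ξ.2) * -1) • P₀₀ + ((1 - ξ.2) * 1) • P₁₀ + (ξ.2 * -1) • P₀₁ + (ξ.2 * 1) • P₁₁).1 *
        (((1 - ξ.1) * -1) • P₀₀ + ((1 - ξ.1) * 1) • P₀₁ + (ξ.1 * -1) • P₁₀ + (ξ.1 * 1) • P₁₁).2 -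
      (((1 - ξ.2) * -1) • P₀₀ + ((1 - ξ.2) * 1) • P₁₀ + (ξ.2 * -1) • P₀₁ + (ξ.2 * 1) • P₁₁).2 *
        (((1 - ξ.1) * -1) • P₀₀ + ((1 - ξ.1) * 1) • P₀₁ + (ξ.1 * -1) • P₁₀ + (ξ.1 * 1) • P₁₁).1 =
      (1 - ξ.2) * ((1 - ξ.1) * cross2 (P₁₀ - P₀₀) (P₀₁ - P₀₀) + ξ.1 * cross2 (P₁₁ - P₁₀) (P₀₀ - P₁₀))
      + ξ.2 * ((1 - ξ.1) * cross2 (P₀₀ - P₀₁) (P₁₁ - P₀₁) + ξ.1 * cross2 (P₀₁ - P₁₁) (P₁₀ - P₁₁)) := by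
    simp only [Prod.fst_add, Prod.snd_add, Prod.smul_fst, Prod.smul_snd, Prod.fst_sub,
      Prod.snd_sub, smul_eq_mul, cross2]
    ring
  rw [key]
  exact convex_combo_pos hb0 hb1
    (convex_combo_pos ha0 ha1 h₀₀ h₁₀)
    (convex_combo_pos ha0 ha1 h₀₁ h₁₁)
end

section
/- The Jacobian determinant of the bilinear interpolation G of four points in ℝ² is an affine (degree ≤ 1 in each variable jointly linear) function of (ξ₁,ξ₂); hence it is positive on [0,1]² if and only if it is positive at the four corners. -/
private lemma det_two' (f : (ℝ × ℝ) →ₗ[ℝ] (ℝ × ℝ)) :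
    LinearMap.det f = (f (1,0)).1 * (f (0,1)).2 - (f (0,1)).1 * (f (1,0)).2 := by
  rw [← LinearMap.det_toMatrix (Module.Basis.finTwoProd ℝ), Matrix.det_fin_two]
  simp [LinearMap.toMatrix_apply, Module.Basis.coe_finTwoProd_repr]

private lemma affpos' {a b : ℝ} (ha : 0 < a) (hb : 0 < b) {t : ℝ}
    (h0 : 0 ≤ t) (h1 : t ≤ 1) : 0 < (1 - t) * a + t * b := by
  rcases le_total a b with h | h
  · nlinarith [mul_le_mul_of_nonneg_left h h0]
  · nlinarith [mul_le_mul_of_nonneg_left h (sub_nonneg.2 h1)]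

set_option maxHeartbeats 1000000 in
/-- The Jacobian determinant of the bilinear interpolation of four points in
`ℝ²` is an affine function of `(ξ₁, ξ₂)`; hence it is positive on `[0,1]²` iff
it is positive at the four corners. -/
theorem bilinear_jacobian_affine_and_corner_criterion
    (P₀₀ P₁₀ P₀₁ P₁₁ : ℝ × ℝ)
    (G : ℝ × ℝ → ℝ × ℝ)
    (hG : ∀ ξ : ℝ × ℝ, G ξ =
      ((1 - ξ.1) * (1 - ξ.2)) • P₀₀ + (ξ.1 * (1 - ξ.2)) • P₁₀
      + ((1 - ξ.1) * ξ.2) • P₀₁ + (ξ.1 * ξ.2) • P₁₁)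
    (J : ℝ × ℝ → ℝ)
    (hJ : ∀ ξ : ℝ × ℝ, J ξ = LinearMap.det
      ((fderiv ℝ G ξ : (ℝ × ℝ) →L[ℝ] (ℝ × ℝ)) : (ℝ × ℝ) →ₗ[ℝ] (ℝ × ℝ))) :
    (∃ a b c : ℝ, ∀ ξ : ℝ × ℝ, J ξ = a + b * ξ.1 + c * ξ.2) ∧
    ((∀ ξ ∈ Set.Icc ((0 : ℝ), (0 : ℝ)) (1, 1), 0 < J ξ) ↔
      (0 < J (0, 0) ∧ 0 < J (1, 0) ∧ 0 < J (0, 1) ∧ 0 < J (1, 1))) := by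
  have key : ∀ ξ : ℝ × ℝ,
      J ξ = ((P₁₀.1 - P₀₀.1) + ξ.2 * (P₀₀.1 - P₁₀.1 - P₀₁.1 + P₁₁.1)) *
            ((P₀₁.2 - P₀₀.2) + ξ.1 * (P₀₀.2 - P₁₀.2 - P₀₁.2 + P₁₁.2)) -
            ((P₀₁.1 - P₀₀.1) + ξ.1 * (P₀₀.1 - P₁₀.1 - P₀₁.1 + P₁₁.1)) *
            ((P₁₀.2 - P₀₀.2) + ξ.2 * (P₀₀.2 - P₁₀.2 - P₀₁.2 + P₁₁.2)) := by
    intro ξ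
    have hx : HasFDerivAt (fun p : ℝ × ℝ => p.1) (ContinuousLinearMap.fst ℝ ℝ ℝ) ξ :=
      hasFDerivAt_fst
    have hy : HasFDerivAt (fun p : ℝ × ℝ => p.2) (ContinuousLinearMap.snd ℝ ℝ ℝ) ξ :=
      hasFDerivAt_snd
    have h1 := ((((hasFDerivAt_const (1:ℝ) ξ).sub hx).mul
      ((hasFDerivAt_const (1:ℝ) ξ).sub hy)).smul_const P₀₀)
    have h2 := ((hx.mul ((hasFDerivAt_const (1:ℝ) ξ).sub hy)).smul_const P₁₀)
    have h3 := ((((hasFDerivAt_const (1:ℝ) ξ).sub hx).mul hy).smul_const P₀₁)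
    have h4 := ((hx.mul hy).smul_const P₁₁)
    have hD := ((h1.add h2).add h3).add h4
    rw [funext hG] at *
    erw [hJ ξ, hD.fderiv, det_two']
    simp
    ring
  constructor
  · refine ⟨(P₁₀.1 - P₀₀.1) * (P₀₁.2 - P₀₀.2) - (P₀₁.1 - P₀₀.1) * (P₁₀.2 - P₀₀.2),
      (P₁₀.1 - P₀₀.1) * (P₀₀.2 - P₁₀.2 - P₀₁.2 + P₁₁.2)
        - (P₁₀.2 - P₀₀.2) * (P₀₀.1 - P₁₀.1 - P₀₁.1 + P₁₁.1),
      (P₀₀.1 - P₁₀.1 - P₀₁.1 + P₁₁.1) * (P₀₁.2 - P₀₀.2)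
        - (P₀₁.1 - P₀₀.1) * (P₀₀.2 - P₁₀.2 - P₀₁.2 + P₁₁.2), fun ξ => ?_⟩
    rw [key ξ]; ring
  · constructor
    · intro h
      refine ⟨h _ ?_, h _ ?_, h _ ?_, h _ ?_⟩ <;>
        simp [Set.mem_Icc, Prod.le_def]
    · rintro ⟨h00, h10, h01, h11⟩ ξ hξ
      rw [Set.mem_Icc, Prod.le_def, Prod.le_def] at hξ
      obtain ⟨⟨hx0, hy0⟩, hx1, hy1⟩ := hξ
      have hu := affpos' h00 h10 hx0 hx1
      have hv := affpos' h01 h11 hx0 hx1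
      have hw := affpos' hu hv hy0 hy1
      have hEq : J ξ = (1 - ξ.2) * ((1 - ξ.1) * J (0, 0) + ξ.1 * J (1, 0))
          + ξ.2 * ((1 - ξ.1) * J (0, 1) + ξ.1 * J (1, 1)) := by
        rw [key ξ, key (0, 0), key (1, 0), key (0, 1), key (1, 1)]
        norm_num; ring
      rw [hEq]; exact hw
end
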